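/- Let k ≥ 1 and let the Manchester encoding map a binary string u = (u_1,…,u_k) to the string of length 2k obtained by replacing each bit b by the pair (b, 1−b) (so 0 ↦ 01 and 1 ↦ 10). Then the average, over all 2^k binary strings u of length k, of the number of maximal runs of the Manchester encoding of u equals (3k+1)/2 = 3k/2 + 1/2. -/

import Mathlib

/-- Positions `i ≤ j` form a maximal run of the binary string `s` of length `n`:
`s` is constant on `[i,j]`, either `i` is the first position or the preceding symbol differs,
and either `j` is the last position or the following symbol differs. -/
def IsMaxRun {n : ℕ} (s : Fin n → Bool) (i j : Fin n) : Prop :=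
  i ≤ j ∧ (∀ k : Fin n, i ≤ k → k ≤ j → s k = s i) ∧
    ((i : ℕ) = 0 ∨ ∃ i' : Fin n, (i' : ℕ) + 1 = (i : ℕ) ∧ s i' ≠ s i) ∧
    ((j : ℕ) = n - 1 ∨ ∃ j' : Fin n, (j : ℕ) + 1 = (j' : ℕ) ∧ s j' ≠ s j)

/-- The number of maximal runs of a binary string `s` (each maximal run is determined by its
unique pair of endpoints `(i, j)`). -/
noncomputable def runCount {n : ℕ} (s : Fin n → Bool) : ℕ :=
  Nat.card {p : Fin n × Fin n // IsMaxRun s p.1 p.2}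

/-- The Manchester encoding of `u = (u_1,…,u_k)`: each bit `b` is replaced by the pair
`(b, 1−b)`, so `0 ↦ 01` and `1 ↦ 10`. -/
def manchester (k : ℕ) (u : Fin k → Bool) : Fin (2 * k) → Bool := fun i =>
  if i.val % 2 = 0 then u ⟨i.val / 2, by have := i.isLt; omega⟩
  else !u ⟨i.val / 2, by have := i.isLt; omega⟩

open Finset

def startPred {n : ℕ} (s : Fin n → Bool) (i : Fin n) : Prop :=
  (i : ℕ) = 0 ∨ ∃ i' : Fin n, (i' : ℕ) + 1 = (i : ℕ) ∧ s i' ≠ s i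

def IsMaxRun' {n : ℕ} (s : Fin n → Bool) (i j : Fin n) : Prop :=
  i ≤ j ∧ (∀ k : Fin n, i ≤ k → k ≤ j → s k = s i) ∧
    startPred s i ∧
    ((j : ℕ) = n - 1 ∨ ∃ j' : Fin n, (j : ℕ) + 1 = (j' : ℕ) ∧ s j' ≠ s j)

lemma maxrun_le {n : ℕ} {s : Fin n → Bool} {i j j' : Fin n}
    (h : IsMaxRun' s i j) (h' : IsMaxRun' s i j') : j ≤ j' := by
  by_contra hlt
  push_neg at hlt
  -- j' < j, so j'.val ≠ n - 1, and there is j'' = j'+1 ≤ j with s j'' ≠ s j'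
  obtain ⟨hij', hconst', hstart', hend'⟩ := h'
  obtain ⟨hij, hconst, hstart, hend⟩ := h
  rcases hend' with he | ⟨j'', hj'', hne⟩
  · have := j.isLt; have := Fin.lt_def.mp hlt; omega
  · have hj''le : j'' ≤ j := by
      have := Fin.lt_def.mp hlt; exact Fin.le_def.mpr (by omega)
    have hij'' : i ≤ j'' := by
      have h1 : (i:ℕ) ≤ (j':ℕ) := Fin.le_def.mp hij'
      exact Fin.le_def.mpr (by omega)
    have e1 : s j'' = s i := hconst j'' hij'' hj''le
    have e2 : s j' = s i := hconst j' (by exact hij') (le_of_lt hlt)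
    exact hne (by rw [e1, e2])

lemma maxrun_unique {n : ℕ} {s : Fin n → Bool} {i j j' : Fin n}
    (h : IsMaxRun' s i j) (h' : IsMaxRun' s i j') : j = j' :=
  le_antisymm (maxrun_le h h') (maxrun_le h' h)

lemma maxrun_exists {n : ℕ} {s : Fin n → Bool} {i : Fin n}
    (hi : startPred s i) : ∃ j, IsMaxRun' s i j := by
  classical
  set T : Finset (Fin n) :=
    univ.filter (fun j => i ≤ j ∧ ∀ k : Fin n, i ≤ k → k ≤ j → s k = s i) with hT
  have hiT : i ∈ T := by
    simp only [hT, mem_filter, mem_univ, true_and]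
    exact ⟨le_refl i, fun k h1 h2 => by rw [le_antisymm h2 h1]⟩
  have hne : T.Nonempty := ⟨i, hiT⟩
  set j := T.max' hne with hj
  have hjT : j ∈ T := T.max'_mem hne
  simp only [hT, mem_filter, mem_univ, true_and] at hjT
  refine ⟨j, hjT.1, hjT.2, hi, ?_⟩
  by_cases hlast : (j : ℕ) = n - 1
  · exact Or.inl hlast
  · have hn : (j : ℕ) + 1 < n := by have := j.isLt; omega
    set j' : Fin n := ⟨(j : ℕ) + 1, hn⟩ with hj'
    refine Or.inr ⟨j', rfl, fun heq => ?_⟩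
    have hji : s j = s i := hjT.2 j hjT.1 le_rfl
    have hj'T : j' ∈ T := by
      simp only [hT, mem_filter, mem_univ, true_and]
      refine ⟨le_trans hjT.1 (Fin.le_def.mpr (by simp [hj'])), fun k h1 h2 => ?_⟩
      by_cases hk : k ≤ j
      · exact hjT.2 k h1 hk
      · have h2' : (k:ℕ) ≤ (j:ℕ)+1 := Fin.le_def.mp h2
        have h3 : (j:ℕ) < (k:ℕ) := Fin.lt_def.mp (not_le.mp hk)
        have : k = j' := Fin.ext (show (k:ℕ) = (j:ℕ)+1 by omega)
        rw [this, heq, hji]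
    have := T.le_max' j' hj'T
    rw [← hj] at this
    have := Fin.le_def.mp this
    simp [hj'] at this

noncomputable def runCount' {n : ℕ} (s : Fin n → Bool) : ℕ :=
  Nat.card {p : Fin n × Fin n // IsMaxRun' s p.1 p.2}

lemma runCount_eq {n : ℕ} (s : Fin n → Bool) :
    runCount' s = Nat.card {i : Fin n // startPred s i} := by
  classical
  refine Nat.card_congr (Equiv.ofBijective
    (fun x : {i : Fin n // startPred s i} =>
      (⟨(x.1, Classical.choose (maxrun_exists x.2)),
        Classical.choose_spec (maxrun_exists x.2)⟩ :
        {p : Fin n × Fin n // IsMaxRun' s p.1 p.2})) ⟨?_, ?_⟩).symm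
  · intro x y hxy
    have : x.1 = y.1 := congrArg (fun z => z.1.1) hxy
    exact Subtype.ext this
  · rintro ⟨⟨i, j⟩, h⟩
    refine ⟨⟨i, h.2.2.1⟩, ?_⟩
    have := maxrun_unique (Classical.choose_spec (maxrun_exists h.2.2.1)) h
    exact Subtype.ext (Prod.ext rfl this)

lemma natcard_start {n : ℕ} (s : Fin n → Bool) [DecidablePred (startPred s)] :
    Nat.card {i : Fin n // startPred s i} = (Finset.univ.filter (startPred s)).card := by
  rw [Nat.card_eq_fintype_card, Fintype.card_subtype]

def manchester' (k : ℕ) (u : Fin k → Bool) : Fin (2 * k) → Bool := fun i =>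
  if i.val % 2 = 0 then u ⟨i.val / 2, by have := i.isLt; omega⟩
  else !u ⟨i.val / 2, by have := i.isLt; omega⟩

lemma manch_odd (k : ℕ) (u : Fin k → Bool) (m : ℕ) (hm : m < k)
    (h : 2 * m + 1 < 2 * k) :
    manchester' k u ⟨2 * m + 1, h⟩ = !u ⟨m, hm⟩ := by
  simp only [manchester']
  rw [if_neg (by omega)]
  have h2 : (2 * m + 1) / 2 = m := by omega
  simp only [h2]

lemma manch_even (k : ℕ) (u : Fin k → Bool) (m : ℕ) (hm : m < k)
    (h : 2 * m < 2 * k) :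
    manchester' k u ⟨2 * m, h⟩ = u ⟨m, hm⟩ := by
  simp only [manchester']
  rw [if_pos (by omega)]
  have h2 : 2 * m / 2 = m := by omega
  simp only [h2]

lemma bool_aux : ∀ a b : Bool, ((!a) ≠ b ↔ b = a) := by decide

lemma start_odd (k : ℕ) (u : Fin k → Bool) (m : ℕ) (hm : m < k)
    (h : 2 * m + 1 < 2 * k) :
    startPred (manchester' k u) ⟨2 * m + 1, h⟩ := by
  refine Or.inr ⟨⟨2 * m, by omega⟩, rfl, ?_⟩
  rw [manch_even k u m hm, manch_odd k u m hm]
  simp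

lemma start_even (k : ℕ) (u : Fin k → Bool) (t : Fin k) (ht : (t : ℕ) ≠ 0)
    (h : 2 * t.val < 2 * k) :
    startPred (manchester' k u) ⟨2 * t.val, h⟩ ↔
      u t = u ⟨t.val - 1, Nat.lt_of_le_of_lt (Nat.sub_le _ _) t.isLt⟩ := by
  have hm : t.val - 1 < k := Nat.lt_of_le_of_lt (Nat.sub_le _ _) t.isLt
  have hi' : 2 * (t.val - 1) + 1 < 2 * k := by have := t.isLt; omega
  have hval : manchester' k u ⟨2 * t.val, h⟩ = u t := by
    have := manch_even k u t.val t.isLt h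
    rwa [show (⟨t.val, t.isLt⟩ : Fin k) = t from rfl] at this
  constructor
  · rintro (h0 | ⟨i', hi1, hne⟩)
    · have h0' : 2 * t.val = 0 := h0
      omega
    · have : i' = ⟨2 * (t.val - 1) + 1, hi'⟩ := Fin.ext (by simp at hi1 ⊢; omega)
      rw [this, manch_odd k u _ hm, hval] at hne
      exact (bool_aux _ _).mp hne
  · intro hu
    refine Or.inr ⟨⟨2 * (t.val - 1) + 1, hi'⟩, by simp; omega, ?_⟩
    rw [manch_odd k u _ hm, hval]
    exact (bool_aux _ _).mpr hu

instance startPred_dec {n : ℕ} (s : Fin n → Bool) : DecidablePred (startPred s) := fun _ => by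
  unfold startPred; infer_instance

def Q (k : ℕ) (u : Fin k → Bool) (t : Fin k) : Prop :=
  (t : ℕ) ≠ 0 ∧ u t = u ⟨(t : ℕ) - 1, Nat.lt_of_le_of_lt (Nat.sub_le _ _) t.isLt⟩

instance Q_dec (k : ℕ) (u : Fin k → Bool) : DecidablePred (Q k u) := fun _ => by
  unfold Q; infer_instance

lemma sum_zero_ind (k : ℕ) (hk : 1 ≤ k) :
    (∑ t : Fin k, if (t : ℕ) = 0 then 1 else 0) = 1 := by
  have hz : ∀ t : Fin k, ((if (t : ℕ) = 0 then 1 else 0) : ℕ)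
      = if t = (⟨0, hk⟩ : Fin k) then 1 else 0 := fun t =>
    if_congr ⟨fun h => Fin.ext h, fun h => congrArg Fin.val h⟩ rfl rfl
  rw [Finset.sum_congr rfl (fun t _ => hz t),
    Finset.sum_ite_eq' Finset.univ (⟨0, hk⟩ : Fin k) (fun _ => 1)]
  simp

lemma count_start (k : ℕ) (hk : 1 ≤ k) (u : Fin k → Bool) :
    (Finset.univ.filter (startPred (manchester' k u))).card
      = (k + 1) + (Finset.univ.filter (Q k u)).card := by
  classical
  set f : Fin k × Fin 2 → Fin (2 * k) := fun p =>
    ⟨2 * p.1.val + p.2.val, by have := p.1.isLt; have := p.2.isLt; omega⟩ with hf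
  have hbij : Function.Bijective f := by
    rw [Fintype.bijective_iff_injective_and_card]
    refine ⟨?_, by simp [mul_comm]⟩
    rintro ⟨t, r⟩ ⟨t', r'⟩ hp
    have hv : 2 * t.val + r.val = 2 * t'.val + r'.val := congrArg Fin.val hp
    have hr := r.isLt; have hr' := r'.isLt
    have : t.val = t'.val ∧ r.val = r'.val := by omega
    exact Prod.ext (Fin.ext this.1) (Fin.ext this.2)
  rw [Finset.card_filter]
  rw [← Fintype.sum_bijective f hbij
    (fun p => if startPred (manchester' k u) (f p) then 1 else 0)
    (fun i => if startPred (manchester' k u) i then 1 else 0) (fun p => rfl)]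
  rw [Fintype.sum_prod_type]
  have key : ∀ t : Fin k,
      (∑ r : Fin 2, if startPred (manchester' k u) (f (t, r)) then 1 else 0)
        = ((if (t : ℕ) = 0 then 1 else 0) + (if Q k u t then 1 else 0)) + 1 := by
    intro t
    rw [Fin.sum_univ_two]
    have h1 : (if startPred (manchester' k u) (f (t, 1)) then (1:ℕ) else 0) = 1 := by
      apply if_pos
      exact start_odd k u t.val t.isLt (by have := t.isLt; omega)
    rw [h1]
    by_cases ht : (t : ℕ) = 0
    · have h0 : (if startPred (manchester' k u) (f (t, 0)) then (1:ℕ) else 0) = 1 := by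
        apply if_pos
        exact Or.inl (show 2 * t.val + (0 : Fin 2).val = 0 by simp [ht])
      rw [h0, if_pos ht, if_neg (fun hq : Q k u t => hq.1 ht)]
    · have heq : startPred (manchester' k u) (f (t, 0)) ↔ Q k u t := by
        have h2 : f (t, 0) = ⟨2 * t.val, by have := t.isLt; omega⟩ := Fin.ext (by simp [hf])
        rw [h2, start_even k u t ht]
        exact ⟨fun h => ⟨ht, h⟩, And.right⟩
      rw [if_congr heq rfl rfl, if_neg ht]
      omega
  rw [Finset.sum_congr rfl (fun t _ => key t), Finset.sum_add_distrib,
    Finset.sum_add_distrib, sum_zero_ind k hk, Finset.sum_const, ← Finset.card_filter]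
  simp only [Finset.card_univ, Fintype.card_fin, smul_eq_mul, mul_one]
  have he : Finset.filter (fun i => Q k u i) Finset.univ
      = Finset.filter (Q k u) Finset.univ := rfl
  rw [he]
  omega

lemma card_pair (k : ℕ) (t t' : Fin k) (h : t ≠ t') :
    (Finset.univ.filter (fun u : Fin k → Bool => u t = u t')).card = 2 ^ (k - 1) := by
  classical
  set P : (Fin k → Bool) → Prop := fun u => u t = u t' with hP
  set f : (Fin k → Bool) → (Fin k → Bool) := fun u => Function.update u t (!(u t)) with hfd
  have hft : ∀ u, f u t = !(u t) := fun u => Function.update_self _ _ _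
  have hft' : ∀ u, f u t' = u t' := fun u => Function.update_of_ne (Ne.symm h) _ _
  have hmem : ∀ u, P u → ¬ P (f u) := by
    intro u hu hfu
    have hfu' : f u t = f u t' := hfu
    rw [hft, hft', ← hu] at hfu'
    exact (Bool.not_ne_self _) hfu'
  have hmem' : ∀ u, ¬ P u → P (f u) := by
    intro u hu
    simp only [hP, hft, hft'] at hu ⊢
    cases hb : u t <;> cases hb' : u t' <;> simp [hb, hb'] at hu ⊢
  have hinv : ∀ u, f (f u) = u := by
    intro u
    funext x
    rcases eq_or_ne x t with rfl | hx
    · simp [hfd]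
    · simp [hfd, Function.update_of_ne hx]
  have hcard : (Finset.univ.filter P).card = (Finset.univ.filter (fun u => ¬ P u)).card := by
    refine Finset.card_bij' (fun u _ => f u) (fun u _ => f u) ?_ ?_ ?_ ?_
    · intro a ha
      simp only [Finset.mem_filter, Finset.mem_univ, true_and] at ha ⊢
      exact hmem a ha
    · intro a ha
      simp only [Finset.mem_filter, Finset.mem_univ, true_and] at ha ⊢
      exact hmem' a ha
    · intro a _; exact hinv a
    · intro a _; exact hinv a
  have hsplit := Finset.card_filter_add_card_filter_not (s := Finset.univ) (p := P)
  have huniv : (Finset.univ : Finset (Fin k → Bool)).card = 2 ^ k := by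
    simp [Finset.card_univ]
  have hk : 1 ≤ k := t.pos
  have hpow : 2 ^ k = 2 * 2 ^ (k - 1) := by
    conv_lhs => rw [show k = (k - 1) + 1 by omega]
    rw [pow_succ]
    ring
  rw [hcard] at hsplit
  rw [huniv, hpow] at hsplit
  rw [hcard]
  omega

lemma sum_Q (k : ℕ) (hk : 1 ≤ k) :
    (∑ u : Fin k → Bool, (Finset.univ.filter (Q k u)).card)
      = (k - 1) * 2 ^ (k - 1) := by
  classical
  have hswap : (∑ u : Fin k → Bool, (Finset.univ.filter (Q k u)).card)
      = ∑ t : Fin k, ∑ u : Fin k → Bool, (if Q k u t then 1 else 0) := by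
    rw [← Finset.sum_comm]
    exact Finset.sum_congr rfl (fun u _ => Finset.card_filter _ _)
  rw [hswap]
  have key : ∀ t : Fin k,
      (∑ u : Fin k → Bool, (if Q k u t then 1 else 0))
        = if (t : ℕ) = 0 then 0 else 2 ^ (k - 1) := by
    intro t
    by_cases ht : (t : ℕ) = 0
    · rw [if_pos ht]
      refine Finset.sum_eq_zero (fun u _ => ?_)
      exact if_neg (fun hq => hq.1 ht)
    · rw [if_neg ht]
      set t' : Fin k := ⟨(t : ℕ) - 1, Nat.lt_of_le_of_lt (Nat.sub_le _ _) t.isLt⟩ with ht'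
      have hne : t ≠ t' := by
        intro hc
        have : (t : ℕ) = (t : ℕ) - 1 := congrArg Fin.val hc
        omega
      have hQ : ∀ u : Fin k → Bool, Q k u t ↔ u t = u t' :=
        fun u => ⟨And.right, fun hh => ⟨ht, hh⟩⟩
      calc (∑ u : Fin k → Bool, (if Q k u t then 1 else 0))
          = ∑ u : Fin k → Bool, (if u t = u t' then 1 else 0) :=
            Finset.sum_congr rfl (fun u _ => if_congr (hQ u) rfl rfl)
        _ = (Finset.univ.filter (fun u : Fin k → Bool => u t = u t')).card :=
            (Finset.card_filter _ _).symm
        _ = 2 ^ (k - 1) := card_pair k t t' hne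
  rw [Finset.sum_congr rfl (fun t _ => key t), Finset.sum_ite]
  simp only [Finset.sum_const, smul_eq_mul, Finset.sum_const_zero, zero_add,
    mul_zero, zero_add]
  have hcard0 : (Finset.univ.filter (fun t : Fin k => (t : ℕ) = 0)).card = 1 := by
    rw [Finset.card_filter]
    exact sum_zero_ind k hk
  have := Finset.card_filter_add_card_filter_not
    (s := (Finset.univ : Finset (Fin k))) (p := fun t => (t : ℕ) = 0)
  simp only [Finset.card_univ, Fintype.card_fin] at this
  have hc : (Finset.univ.filter (fun t : Fin k => ¬ (t : ℕ) = 0)).card = k - 1 := by omega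
  rw [hc]

/-- The average, over all `2^k` binary information strings `u` of length `k`, of the number
of maximal runs of the Manchester encoding of `u` equals `3k/2 + 1/2`. -/
theorem stmt19 (k : ℕ) (hk : 1 ≤ k) :
    (∑ u : Fin k → Bool, (runCount (manchester k u) : ℝ)) / 2 ^ k
      = (3 * (k : ℝ) + 1) / 2 := by
  classical
  have hrc : ∀ u : Fin k → Bool,
      runCount (manchester k u) = (k + 1) + (Finset.univ.filter (Q k u)).card := by
    intro u
    have h1 : runCount (manchester k u) = runCount' (manchester' k u) := rfl
    rw [h1, runCount_eq, natcard_start, count_start k hk u]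
  have hnat : (∑ u : Fin k → Bool, runCount (manchester k u))
      = (k + 1) * 2 ^ k + (k - 1) * 2 ^ (k - 1) := by
    rw [Finset.sum_congr rfl (fun u _ => hrc u), Finset.sum_add_distrib, sum_Q k hk,
      Finset.sum_const, Finset.card_univ]
    simp [mul_comm]
  have hcast : (∑ u : Fin k → Bool, (runCount (manchester k u) : ℝ))
      = ((k + 1) * 2 ^ k + (k - 1) * 2 ^ (k - 1) : ℕ) := by
    rw [← hnat]
    push_cast
    ring
  rw [hcast]
  have hpow : (2 : ℝ) ^ k = 2 * 2 ^ (k - 1) := by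
    conv_lhs => rw [show k = (k - 1) + 1 by omega]
    ring
  rw [div_eq_div_iff (by positivity) (by norm_num)]
  push_cast [Nat.cast_sub hk]
  rw [hpow]
  ring
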